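/- Let M be an n×m matrix over the field F₂ with two elements and let d be a natural number. Suppose that for every nonzero vector c ∈ F₂^n, the vector Mᵀc ∈ F₂^m has Hamming weight greater than d. Then for every linear subspace V of F₂^n of dimension strictly less than n, the number of indices i ∈ {1,…,m} such that the i-th column of M lies in V is at most m − d. -/
import Mathlib

open Matrix

/-- If for every nonzero `c ∈ F₂^n` the vector `Mᵀc ∈ F₂^m` has Hamming weight greater
than `d`, then for every linear subspace `V` of `F₂^n` of dimension strictly less than `n`,
the number of indices `i ∈ [m]` such that the `i`-th column of `M` lies in `V` is at most
`m − d`. -/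
theorem stmt_3 (n m d : ℕ) (M : Matrix (Fin n) (Fin m) (ZMod 2))
    (h : ∀ c : Fin n → ZMod 2, c ≠ 0 →
      d < (Finset.univ.filter fun j => Mᵀ.mulVec c j ≠ 0).card) :
    ∀ V : Submodule (ZMod 2) (Fin n → ZMod 2), Module.finrank (ZMod 2) V < n →
      {i : Fin m | (fun r => M r i) ∈ V}.ncard ≤ m - d := by
  intro V hV
  have hVlt : V < ⊤ := by
    rcases lt_or_eq_of_le (le_top : V ≤ ⊤) with h' | h'
    · exact h'
    · exfalso
      rw [h'] at hV
      rw [finrank_top, Module.finrank_pi] at hV; simp [Fintype.card_fin] at hV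
  obtain ⟨f, hf0, hfV⟩ := V.exists_dual_map_eq_bot_of_lt_top hVlt inferInstance
  set c : Fin n → ZMod 2 := fun i => f (Pi.single i 1) with hc
  have key : ∀ y : Fin n → ZMod 2, f y = ∑ i, y i * c i := by
    intro y
    conv_lhs => rw [pi_eq_sum_univ y]
    rw [map_sum]
    simp only [hc, mul_comm]
    refine Finset.sum_congr rfl fun i _ => ?_
    have : (fun j => if i = j then (1:ZMod 2) else 0) = Pi.single i 1 := by
      ext j; simp [Pi.single_apply, eq_comm]
    rw [this, _root_.map_smul, smul_eq_mul]
  have hcne : c ≠ 0 := by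
    intro h0
    apply hf0
    ext y
    simp [key, h0]
  have hfVzero : ∀ v ∈ V, f v = 0 := by
    intro v hv
    have : f v ∈ V.map f := Submodule.mem_map_of_mem hv
    rwa [hfV, Submodule.mem_bot] at this
  have hsub : {i : Fin m | (fun r => M r i) ∈ V} ⊆
      ↑(Finset.univ.filter fun j => ¬ (Mᵀ.mulVec c j ≠ 0)) := by
    intro i hi
    simp only [Finset.coe_filter, Set.mem_setOf_eq, Finset.mem_univ, true_and, not_not]
    have := hfVzero _ hi
    rw [key] at this
    simpa [Matrix.mulVec, dotProduct, mul_comm] using this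
  have hcard := Set.ncard_le_ncard hsub (Set.toFinite _)
  rw [Set.ncard_coe_finset] at hcard
  have hcompl : (Finset.univ.filter fun j => ¬ (Mᵀ.mulVec c j ≠ 0)).card
      = m - (Finset.univ.filter fun j => Mᵀ.mulVec c j ≠ 0).card := by
    rw [Finset.filter_not, Finset.card_sdiff_of_subset (Finset.filter_subset _ _)]
    simp
  have hd := h c hcne
  omega
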